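/- arXiv:1908.11169 — 2 statements merged into one kernel-verified Lean document; each statement's English description precedes it below -/
import Mathlib

section
/- A functor F : psh(C) → psh(C) is familial if and only if every morphism g : Y → F(X) admits a generic-free factorisation Y → F(A) → F(X), i.e., g = F(φ) ∘ ξ with ξ F-generic. -/
open CategoryTheory Limits Opposite

/-- A familial endofunctor on a presheaf category: `F(X)(c) ≅ Σ_{o ∈ F(1)(c)} Hom(E(c,o), X)`,
naturally in `X` and `c`, for some arity functor `E` on the category of elements of `F(1)`. -/
def IsFamilial {C : Type} [SmallCategory C] (F : (Cᵒᵖ ⥤ Type) ⥤ (Cᵒᵖ ⥤ Type)) : Prop :=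
  ∃ (E : ((F.obj (⊤_ (Cᵒᵖ ⥤ Type))).Elements)ᵒᵖ ⥤ (Cᵒᵖ ⥤ Type))
    (i : ∀ (X : Cᵒᵖ ⥤ Type) (c : Cᵒᵖ), (F.obj X).obj c ≃
      Σ o : (F.obj (⊤_ (Cᵒᵖ ⥤ Type))).obj c, (E.obj (op ((F.obj (⊤_ (Cᵒᵖ ⥤ Type))).elementsMk c o)) ⟶ X)),
    (∀ (X Y : Cᵒᵖ ⥤ Type) (f : X ⟶ Y) (c : Cᵒᵖ) (x : (F.obj X).obj c),
      i Y c ((F.map f).app c x) = ⟨(i X c x).1, (i X c x).2 ≫ f⟩) ∧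
    (∀ (X : Cᵒᵖ ⥤ Type) (c c' : Cᵒᵖ) (g : c ⟶ c') (x : (F.obj X).obj c),
      i X c' ((F.obj X).map g x) =
        ⟨(F.obj (⊤_ (Cᵒᵖ ⥤ Type))).map g (i X c x).1,
          E.map (Quiver.Hom.op
            (⟨g, rfl⟩ : (F.obj (⊤_ (Cᵒᵖ ⥤ Type))).elementsMk c (i X c x).1 ⟶
              (F.obj (⊤_ (Cᵒᵖ ⥤ Type))).elementsMk c'
                ((F.obj (⊤_ (Cᵒᵖ ⥤ Type))).map g (i X c x).1))) ≫ (i X c x).2⟩)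

/-- A morphism `ξ : Y ⟶ F(A)` is `F`-generic when every commuting square
`χ ≫ F(h) = ξ ≫ F(k)` admits a unique strong lifting `l` with `ξ ≫ F(l) = χ` and `l ≫ h = k`. -/
def IsGeneric {C D : Type*} [Category C] [Category D] (F : C ⥤ D) {Y : D} {A : C}
    (ξ : Y ⟶ F.obj A) : Prop :=
  ∀ {B Z : C} (χ : Y ⟶ F.obj B) (h : B ⟶ Z) (k : A ⟶ Z),
    χ ≫ F.map h = ξ ≫ F.map k →
      ∃! l : A ⟶ B, ξ ≫ F.map l = χ ∧ l ≫ h = k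

namespace Stmt14Aux


theorem elements_hom_ext {C : Type} [SmallCategory C] {G : Cᵒᵖ ⥤ Type} {a b : G.Elements}
    {m m' : a ⟶ b} (h : m.1 = m'.1) : m = m' := Subtype.ext h

theorem sigma_snd_eq {α : Type} {β : α → Type} {a : α} {b b' : β a}
    (h : (⟨a, b⟩ : Σ x, β x) = ⟨a, b'⟩) : b = b' := by
  cases h
  rfl

theorem Emap_id {C : Type} [SmallCategory C] {G : Cᵒᵖ ⥤ Type}
    (E : (G.Elements)ᵒᵖ ⥤ (Cᵒᵖ ⥤ Type)) {a : G.Elements} (m : a ⟶ a) (h : m.1 = 𝟙 a.1) :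
    E.map m.op = 𝟙 (E.obj (op a)) := by
  rw [elements_hom_ext (m' := 𝟙 a) h]
  simp

theorem Emap_comp {C : Type} [SmallCategory C] {G : Cᵒᵖ ⥤ Type}
    (E : (G.Elements)ᵒᵖ ⥤ (Cᵒᵖ ⥤ Type)) {a b c : G.Elements} (m : a ⟶ c) (m₁ : a ⟶ b)
    (m₂ : b ⟶ c) (h : m.1 = m₁.1 ≫ m₂.1) : E.map m.op = E.map m₂.op ≫ E.map m₁.op := by
  rw [elements_hom_ext (m' := m₁ ≫ m₂) h, op_comp, E.map_comp]

theorem transportE {C : Type} [SmallCategory C] {G : Cᵒᵖ ⥤ Type}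
    (E : (G.Elements)ᵒᵖ ⥤ (Cᵒᵖ ⥤ Type)) {c c' : Cᵒᵖ} (γ : c ⟶ c') {o : G.obj c}
    {o' : G.obj c'} (h : G.map γ o = o') {W : Cᵒᵖ ⥤ Type}
    (t : E.obj (op (G.elementsMk c o)) ⟶ W) :
    (⟨G.map γ o, E.map (Quiver.Hom.op
        (⟨γ, rfl⟩ : G.elementsMk c o ⟶ G.elementsMk c' (G.map γ o))) ≫ t⟩ :
      Σ o'', E.obj (op (G.elementsMk c' o'')) ⟶ W) =
    ⟨o', E.map (Quiver.Hom.op (⟨γ, h⟩ : G.elementsMk c o ⟶ G.elementsMk c' o')) ≫ t⟩ := by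
  cases h
  rfl

/-- The diagram whose colimit is the middle object of the generic factorisation. -/
def Dia {C : Type} [SmallCategory C] (Y G : Cᵒᵖ ⥤ Type)
    (E : (G.Elements)ᵒᵖ ⥤ (Cᵒᵖ ⥤ Type)) (po : ∀ c, Y.obj c → G.obj c)
    (hpo : ∀ {c c' : Cᵒᵖ} (γ : c ⟶ c') (y : Y.obj c), G.map γ (po c y) = po c' (Y.map γ y)) :
    (Y.Elements)ᵒᵖ ⥤ (Cᵒᵖ ⥤ Type) where
  obj x := E.obj (op (G.elementsMk x.unop.1 (po x.unop.1 x.unop.2)))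
  map {x y} f := E.map (Quiver.Hom.op
    (⟨f.unop.1, by rw [hpo f.unop.1 y.unop.2, f.unop.2]⟩ :
      G.elementsMk y.unop.1 (po y.unop.1 y.unop.2) ⟶
        G.elementsMk x.unop.1 (po x.unop.1 x.unop.2)))
  map_id x := Emap_id E _ rfl
  map_comp {x y z} f g := Emap_comp E _ _ _ rfl


theorem free_of_familial {C : Type} [SmallCategory C] (F : (Cᵒᵖ ⥤ Type) ⥤ (Cᵒᵖ ⥤ Type))
    (hF : IsFamilial F) (X Y : Cᵒᵖ ⥤ Type) (g : Y ⟶ F.obj X) :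
    ∃ (B : Cᵒᵖ ⥤ Type) (ξ : Y ⟶ F.obj B) (φ : B ⟶ X),
      IsGeneric F ξ ∧ ξ ≫ F.map φ = g := by
  obtain ⟨E, i, hnat, hnatc⟩ := hF
  have mapSig : ∀ {c c' : Cᵒᵖ} (γ : c ⟶ c') {W : Cᵒᵖ ⥤ Type}
      (w w' : Σ o : (F.obj (⊤_ (Cᵒᵖ ⥤ Type))).obj c, E.obj (op ((F.obj (⊤_ (Cᵒᵖ ⥤ Type))).elementsMk c o)) ⟶ W), w = w' →
      (⟨(F.obj (⊤_ (Cᵒᵖ ⥤ Type))).map γ w.1, E.map (Quiver.Hom.op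
          (⟨γ, rfl⟩ : (F.obj (⊤_ (Cᵒᵖ ⥤ Type))).elementsMk c w.1 ⟶ (F.obj (⊤_ (Cᵒᵖ ⥤ Type))).elementsMk c' ((F.obj (⊤_ (Cᵒᵖ ⥤ Type))).map γ w.1))) ≫ w.2⟩ :
        Σ o : (F.obj (⊤_ (Cᵒᵖ ⥤ Type))).obj c', E.obj (op ((F.obj (⊤_ (Cᵒᵖ ⥤ Type))).elementsMk c' o)) ⟶ W) =
      ⟨(F.obj (⊤_ (Cᵒᵖ ⥤ Type))).map γ w'.1, E.map (Quiver.Hom.op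
          (⟨γ, rfl⟩ : (F.obj (⊤_ (Cᵒᵖ ⥤ Type))).elementsMk c w'.1 ⟶ (F.obj (⊤_ (Cᵒᵖ ⥤ Type))).elementsMk c' ((F.obj (⊤_ (Cᵒᵖ ⥤ Type))).map γ w'.1))) ≫ w'.2⟩ := by
    intro c c' γ W w w' h
    cases h
    rfl
  have hnatc' : ∀ (W : Cᵒᵖ ⥤ Type) {c c' : Cᵒᵖ} (γ : c ⟶ c') (x : (F.obj W).obj c)
      (w : Σ o : (F.obj (⊤_ (Cᵒᵖ ⥤ Type))).obj c, E.obj (op ((F.obj (⊤_ (Cᵒᵖ ⥤ Type))).elementsMk c o)) ⟶ W), i W c x = w →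
      i W c' ((F.obj W).map γ x) =
        ⟨(F.obj (⊤_ (Cᵒᵖ ⥤ Type))).map γ w.1, E.map (Quiver.Hom.op
          (⟨γ, rfl⟩ : (F.obj (⊤_ (Cᵒᵖ ⥤ Type))).elementsMk c w.1 ⟶ (F.obj (⊤_ (Cᵒᵖ ⥤ Type))).elementsMk c' ((F.obj (⊤_ (Cᵒᵖ ⥤ Type))).map γ w.1))) ≫ w.2⟩ :=
    fun W _ _ γ x w hw => (hnatc W _ _ γ x).trans (mapSig γ _ _ hw)
  have hnat' : ∀ {W Z : Cᵒᵖ ⥤ Type} (f : W ⟶ Z) {c : Cᵒᵖ} (x : (F.obj W).obj c)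
      (w : Σ o : (F.obj (⊤_ (Cᵒᵖ ⥤ Type))).obj c, E.obj (op ((F.obj (⊤_ (Cᵒᵖ ⥤ Type))).elementsMk c o)) ⟶ W), i W c x = w →
      i Z c ((F.map f).app c x) = ⟨w.1, w.2 ≫ f⟩ := by
    intro W Z f c x w hw
    refine (hnat W Z f c x).trans ?_
    cases hw
    rfl
  have keynat : ∀ (W : Cᵒᵖ ⥤ Type) (τ : Y ⟶ F.obj W) {c c' : Cᵒᵖ} (γ : c ⟶ c') (y : Y.obj c)
      (w : Σ o : (F.obj (⊤_ (Cᵒᵖ ⥤ Type))).obj c, E.obj (op ((F.obj (⊤_ (Cᵒᵖ ⥤ Type))).elementsMk c o)) ⟶ W), i W c (τ.app c y) = w →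
      i W c' (τ.app c' (Y.map γ y)) =
        ⟨(F.obj (⊤_ (Cᵒᵖ ⥤ Type))).map γ w.1, E.map (Quiver.Hom.op
          (⟨γ, rfl⟩ : (F.obj (⊤_ (Cᵒᵖ ⥤ Type))).elementsMk c w.1 ⟶ (F.obj (⊤_ (Cᵒᵖ ⥤ Type))).elementsMk c' ((F.obj (⊤_ (Cᵒᵖ ⥤ Type))).map γ w.1))) ≫ w.2⟩ := by
    intro W τ c c' γ y w hw
    rw [show τ.app c' (Y.map γ y) = (F.obj W).map γ (τ.app c y) from NatTrans.naturality_apply τ γ y]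
    exact hnatc' W γ _ w hw
  -- componentwise data of g
  obtain ⟨po, ps, hps⟩ : ∃ (po : ∀ c, Y.obj c → (F.obj (⊤_ (Cᵒᵖ ⥤ Type))).obj c)
      (ps : ∀ c (y : Y.obj c), E.obj (op ((F.obj (⊤_ (Cᵒᵖ ⥤ Type))).elementsMk c (po c y))) ⟶ X),
      ∀ c y, i X c (g.app c y) = ⟨po c y, ps c y⟩ :=
    ⟨fun c y => (i X c (g.app c y)).1, fun c y => (i X c (g.app c y)).2, fun c y => rfl⟩
  have hp : ∀ {c c' : Cᵒᵖ} (γ : c ⟶ c') (y : Y.obj c),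
      (⟨po c' (Y.map γ y), ps c' (Y.map γ y)⟩ :
        Σ o : (F.obj (⊤_ (Cᵒᵖ ⥤ Type))).obj c', E.obj (op ((F.obj (⊤_ (Cᵒᵖ ⥤ Type))).elementsMk c' o)) ⟶ X) =
      ⟨(F.obj (⊤_ (Cᵒᵖ ⥤ Type))).map γ (po c y), E.map (Quiver.Hom.op
          (⟨γ, rfl⟩ : (F.obj (⊤_ (Cᵒᵖ ⥤ Type))).elementsMk c (po c y) ⟶ (F.obj (⊤_ (Cᵒᵖ ⥤ Type))).elementsMk c' ((F.obj (⊤_ (Cᵒᵖ ⥤ Type))).map γ (po c y)))) ≫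
        ps c y⟩ :=
    fun γ y => (hps _ _).symm.trans (keynat X g γ y _ (hps _ _))
  have hpo : ∀ {c c' : Cᵒᵖ} (γ : c ⟶ c') (y : Y.obj c),
      (F.obj (⊤_ (Cᵒᵖ ⥤ Type))).map γ (po c y) = po c' (Y.map γ y) :=
    fun γ y => (congrArg Sigma.fst (hp γ y)).symm
  have hpm : ∀ {c c' : Cᵒᵖ} (γ : c ⟶ c') (y : Y.obj c) (y' : Y.obj c') (hy : Y.map γ y = y')
      (m : (F.obj (⊤_ (Cᵒᵖ ⥤ Type))).elementsMk c (po c y) ⟶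
        (F.obj (⊤_ (Cᵒᵖ ⥤ Type))).elementsMk c' (po c' y')), m.1 = γ →
      E.map m.op ≫ ps c y = ps c' y' := by
    intro c c' γ y y' hy m hm
    cases hy
    rw [show m = ⟨γ, hpo γ y⟩ from elements_hom_ext hm]
    exact (sigma_snd_eq ((hp γ y).trans (transportE E γ (hpo γ y) (ps c y)))).symm
  -- the diagram and its colimit
  refine ⟨colimit (Dia Y (F.obj (⊤_ (Cᵒᵖ ⥤ Type))) E po hpo),
    { app := fun c => TypeCat.ofHom fun y => (i (colimit (Dia Y (F.obj (⊤_ (Cᵒᵖ ⥤ Type))) E po hpo)) c).symm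
        ⟨po c y, colimit.ι (Dia Y (F.obj (⊤_ (Cᵒᵖ ⥤ Type))) E po hpo) (op (Y.elementsMk c y))⟩
      naturality := ?_ },
    colimit.desc (Dia Y (F.obj (⊤_ (Cᵒᵖ ⥤ Type))) E po hpo)
      ⟨X, { app := fun x => ps x.unop.1 x.unop.2, naturality := ?_ }⟩, ?_, ?_⟩
  · -- naturality of ξ
    intro c c' γ
    ext y
    apply (i (colimit (Dia Y (F.obj (⊤_ (Cᵒᵖ ⥤ Type))) E po hpo)) c').injective
    show i _ c' ((i _ c').symm
        ⟨po c' (Y.map γ y), colimit.ι (Dia Y (F.obj (⊤_ (Cᵒᵖ ⥤ Type))) E po hpo) (op (Y.elementsMk c' (Y.map γ y)))⟩)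
      = i _ c' ((F.obj (colimit (Dia Y (F.obj (⊤_ (Cᵒᵖ ⥤ Type))) E po hpo))).map γ ((i _ c).symm
        ⟨po c y, colimit.ι (Dia Y (F.obj (⊤_ (Cᵒᵖ ⥤ Type))) E po hpo) (op (Y.elementsMk c y))⟩))
    rw [Equiv.apply_symm_apply,
      hnatc' _ γ _ ⟨po c y, colimit.ι (Dia Y (F.obj (⊤_ (Cᵒᵖ ⥤ Type))) E po hpo) (op (Y.elementsMk c y))⟩
        (Equiv.apply_symm_apply _ _),
      transportE E γ (hpo γ y)]
    exact (congrArg (Sigma.mk (po c' (Y.map γ y)))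
      (colimit.w (Dia Y (F.obj (⊤_ (Cᵒᵖ ⥤ Type))) E po hpo)
        (Quiver.Hom.op (⟨γ, rfl⟩ : Y.elementsMk c y ⟶ Y.elementsMk c' (Y.map γ y))))).symm
  · -- the cocone defining φ
    intro x y f
    simp only [Functor.const_obj_map, Category.comp_id]
    exact hpm f.unop.1 y.unop.2 x.unop.2 f.unop.2 _ rfl
  · -- ξ is generic
    intro B' Z χ h k sq
    obtain ⟨qo, qs, hqs⟩ : ∃ (qo : ∀ c, Y.obj c → (F.obj (⊤_ (Cᵒᵖ ⥤ Type))).obj c)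
        (qs : ∀ c (y : Y.obj c), E.obj (op ((F.obj (⊤_ (Cᵒᵖ ⥤ Type))).elementsMk c (qo c y))) ⟶ B'),
        ∀ c y, i B' c (χ.app c y) = ⟨qo c y, qs c y⟩ :=
      ⟨fun c y => (i B' c (χ.app c y)).1, fun c y => (i B' c (χ.app c y)).2, fun c y => rfl⟩
    have hsq : ∀ (c : Cᵒᵖ) (y : Y.obj c),
        (⟨qo c y, qs c y ≫ h⟩ : Σ o : (F.obj (⊤_ (Cᵒᵖ ⥤ Type))).obj c, E.obj (op ((F.obj (⊤_ (Cᵒᵖ ⥤ Type))).elementsMk c o)) ⟶ Z)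
        = ⟨po c y, colimit.ι (Dia Y (F.obj (⊤_ (Cᵒᵖ ⥤ Type))) E po hpo) (op (Y.elementsMk c y)) ≫ k⟩ := by
      intro c y
      have e1 := ConcreteCategory.congr_hom (NatTrans.congr_app sq c) y
      calc (⟨qo c y, qs c y ≫ h⟩ : Σ o : (F.obj (⊤_ (Cᵒᵖ ⥤ Type))).obj c, E.obj (op ((F.obj (⊤_ (Cᵒᵖ ⥤ Type))).elementsMk c o)) ⟶ Z)
          = i Z c ((F.map h).app c (χ.app c y)) := (hnat' h _ _ (hqs c y)).symm
        _ = i Z c ((F.map k).app c ((i (colimit (Dia Y (F.obj (⊤_ (Cᵒᵖ ⥤ Type))) E po hpo)) c).symm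
              ⟨po c y, colimit.ι (Dia Y (F.obj (⊤_ (Cᵒᵖ ⥤ Type))) E po hpo) (op (Y.elementsMk c y))⟩)) :=
            congrArg (i Z c) e1
        _ = ⟨po c y, colimit.ι (Dia Y (F.obj (⊤_ (Cᵒᵖ ⥤ Type))) E po hpo) (op (Y.elementsMk c y)) ≫ k⟩ :=
            hnat' k _ _ (Equiv.apply_symm_apply _ _)
    have hq1 : ∀ c y, qo c y = po c y := fun c y => congrArg Sigma.fst (hsq c y)
    have hrex : ∀ c y, ∃ r : E.obj (op ((F.obj (⊤_ (Cᵒᵖ ⥤ Type))).elementsMk c (po c y))) ⟶ B',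
        (⟨po c y, r⟩ : Σ o : (F.obj (⊤_ (Cᵒᵖ ⥤ Type))).obj c, E.obj (op ((F.obj (⊤_ (Cᵒᵖ ⥤ Type))).elementsMk c o)) ⟶ B')
          = ⟨qo c y, qs c y⟩ := by
      intro c y
      have h1 := hq1 c y
      rw [← h1]
      exact ⟨qs c y, rfl⟩
    choose r hr using hrex
    have hrh : ∀ c y, r c y ≫ h = colimit.ι (Dia Y (F.obj (⊤_ (Cᵒᵖ ⥤ Type))) E po hpo) (op (Y.elementsMk c y)) ≫ k := by
      intro c y
      refine sigma_snd_eq (α := (F.obj (⊤_ (Cᵒᵖ ⥤ Type))).obj c)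
        (β := fun o => E.obj (op ((F.obj (⊤_ (Cᵒᵖ ⥤ Type))).elementsMk c o)) ⟶ Z) ?_
      calc (⟨po c y, r c y ≫ h⟩ : Σ o : (F.obj (⊤_ (Cᵒᵖ ⥤ Type))).obj c, E.obj (op ((F.obj (⊤_ (Cᵒᵖ ⥤ Type))).elementsMk c o)) ⟶ Z)
          = ⟨qo c y, qs c y ≫ h⟩ :=
            congrArg (fun w : Σ o : (F.obj (⊤_ (Cᵒᵖ ⥤ Type))).obj c, E.obj (op ((F.obj (⊤_ (Cᵒᵖ ⥤ Type))).elementsMk c o)) ⟶ B' =>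
              (⟨w.1, w.2 ≫ h⟩ : Σ o : (F.obj (⊤_ (Cᵒᵖ ⥤ Type))).obj c, E.obj (op ((F.obj (⊤_ (Cᵒᵖ ⥤ Type))).elementsMk c o)) ⟶ Z)) (hr c y)
        _ = ⟨po c y, colimit.ι (Dia Y (F.obj (⊤_ (Cᵒᵖ ⥤ Type))) E po hpo) (op (Y.elementsMk c y)) ≫ k⟩ := hsq c y
    have hq : ∀ {c c' : Cᵒᵖ} (γ : c ⟶ c') (y : Y.obj c),
        (⟨po c' (Y.map γ y), r c' (Y.map γ y)⟩ :
          Σ o : (F.obj (⊤_ (Cᵒᵖ ⥤ Type))).obj c', E.obj (op ((F.obj (⊤_ (Cᵒᵖ ⥤ Type))).elementsMk c' o)) ⟶ B')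
        = ⟨(F.obj (⊤_ (Cᵒᵖ ⥤ Type))).map γ (po c y), E.map (Quiver.Hom.op
            (⟨γ, rfl⟩ : (F.obj (⊤_ (Cᵒᵖ ⥤ Type))).elementsMk c (po c y) ⟶ (F.obj (⊤_ (Cᵒᵖ ⥤ Type))).elementsMk c' ((F.obj (⊤_ (Cᵒᵖ ⥤ Type))).map γ (po c y)))) ≫
          r c y⟩ := by
      intro c c' γ y
      calc (⟨po c' (Y.map γ y), r c' (Y.map γ y)⟩ :
            Σ o : (F.obj (⊤_ (Cᵒᵖ ⥤ Type))).obj c', E.obj (op ((F.obj (⊤_ (Cᵒᵖ ⥤ Type))).elementsMk c' o)) ⟶ B')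
          = ⟨qo c' (Y.map γ y), qs c' (Y.map γ y)⟩ := hr c' _
        _ = i B' c' (χ.app c' (Y.map γ y)) := (hqs c' _).symm
        _ = ⟨(F.obj (⊤_ (Cᵒᵖ ⥤ Type))).map γ (qo c y), E.map (Quiver.Hom.op
              (⟨γ, rfl⟩ : (F.obj (⊤_ (Cᵒᵖ ⥤ Type))).elementsMk c (qo c y) ⟶ (F.obj (⊤_ (Cᵒᵖ ⥤ Type))).elementsMk c' ((F.obj (⊤_ (Cᵒᵖ ⥤ Type))).map γ (qo c y)))) ≫
            qs c y⟩ := keynat B' χ γ y _ (hqs c y)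
        _ = ⟨(F.obj (⊤_ (Cᵒᵖ ⥤ Type))).map γ (po c y), E.map (Quiver.Hom.op
              (⟨γ, rfl⟩ : (F.obj (⊤_ (Cᵒᵖ ⥤ Type))).elementsMk c (po c y) ⟶ (F.obj (⊤_ (Cᵒᵖ ⥤ Type))).elementsMk c' ((F.obj (⊤_ (Cᵒᵖ ⥤ Type))).map γ (po c y)))) ≫
            r c y⟩ := (mapSig γ _ _ (hr c y)).symm
    have hrm : ∀ {c c' : Cᵒᵖ} (γ : c ⟶ c') (y : Y.obj c) (y' : Y.obj c') (hy : Y.map γ y = y')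
        (m : (F.obj (⊤_ (Cᵒᵖ ⥤ Type))).elementsMk c (po c y) ⟶ (F.obj (⊤_ (Cᵒᵖ ⥤ Type))).elementsMk c' (po c' y')), m.1 = γ →
        E.map m.op ≫ r c y = r c' y' := by
      intro c c' γ y y' hy m hm
      cases hy
      rw [show m = ⟨γ, hpo γ y⟩ from elements_hom_ext hm]
      exact (sigma_snd_eq ((hq γ y).trans (transportE E γ (hpo γ y) (r c y)))).symm
    refine ⟨colimit.desc (Dia Y (F.obj (⊤_ (Cᵒᵖ ⥤ Type))) E po hpo)
      ⟨B', { app := fun x => r x.unop.1 x.unop.2, naturality := ?_ }⟩, ⟨?_, ?_⟩, ?_⟩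
    · intro x y f
      simp only [Functor.const_obj_map, Category.comp_id]
      exact hrm f.unop.1 y.unop.2 x.unop.2 f.unop.2 _ rfl
    · -- ξ ≫ F.map l = χ
      ext c y
      apply (i B' c).injective
      show _ = i B' c (χ.app c y)
      rw [hqs]
      refine (hnat' _ _ ⟨po c y, colimit.ι (Dia Y (F.obj (⊤_ (Cᵒᵖ ⥤ Type))) E po hpo) (op (Y.elementsMk c y))⟩
        (Equiv.apply_symm_apply _ _)).trans ?_
      exact (congrArg (Sigma.mk (po c y)) (colimit.ι_desc _ _)).trans (hr c y)
    · -- l ≫ h = k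
      apply colimit.hom_ext
      intro j
      rw [← Category.assoc, colimit.ι_desc]
      exact hrh j.unop.1 j.unop.2
    · -- uniqueness
      rintro l' ⟨hl1, hl2⟩
      apply colimit.hom_ext
      intro j
      rw [colimit.ι_desc]
      have e2 : i B' j.unop.1 (χ.app j.unop.1 j.unop.2)
          = ⟨po j.unop.1 j.unop.2, colimit.ι (Dia Y (F.obj (⊤_ (Cᵒᵖ ⥤ Type))) E po hpo) j ≫ l'⟩ := by
        rw [← hl1]
        exact hnat' l' _
          ⟨po j.unop.1 j.unop.2, colimit.ι (Dia Y (F.obj (⊤_ (Cᵒᵖ ⥤ Type))) E po hpo) (op (Y.elementsMk j.unop.1 j.unop.2))⟩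
          (Equiv.apply_symm_apply _ _)
      exact (sigma_snd_eq ((hr j.unop.1 j.unop.2).trans
        ((hqs j.unop.1 j.unop.2).symm.trans e2))).symm
  · -- factorisation
    ext c y
    apply (i X c).injective
    show _ = i X c (g.app c y)
    rw [hps]
    refine (hnat' _ _ ⟨po c y, colimit.ι (Dia Y (F.obj (⊤_ (Cᵒᵖ ⥤ Type))) E po hpo) (op (Y.elementsMk c y))⟩
      (Equiv.apply_symm_apply _ _)).trans ?_
    exact congrArg (Sigma.mk (po c y)) (colimit.ι_desc _ _)


theorem yoneda_symm_nat {C : Type} [SmallCategory C] {P : Cᵒᵖ ⥤ Type} {c c' : Cᵒᵖ}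
    (γ : c ⟶ c') (η : P.obj c) :
    yoneda.map γ.unop ≫ yonedaEquiv.symm η = yonedaEquiv.symm (P.map γ η) := by
  apply yonedaEquiv.injective
  rw [Equiv.apply_symm_apply, ← yonedaEquiv_naturality']
  simp

set_option maxHeartbeats 2000000 in
theorem familial_of_free {C : Type} [SmallCategory C] (F : (Cᵒᵖ ⥤ Type) ⥤ (Cᵒᵖ ⥤ Type))
    (H : ∀ (X Y : Cᵒᵖ ⥤ Type) (g : Y ⟶ F.obj X),
        ∃ (B : Cᵒᵖ ⥤ Type) (ξ : Y ⟶ F.obj B) (φ : B ⟶ X),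
          IsGeneric F ξ ∧ ξ ≫ F.map φ = g) : IsFamilial F := by
  choose B ξ φ hgen hfac using fun (c : Cᵒᵖ) (o : (F.obj (⊤_ (Cᵒᵖ ⥤ Type))).obj c) =>
    H (⊤_ (Cᵒᵖ ⥤ Type)) (yoneda.obj c.unop) (yonedaEquiv.symm o)
  -- uniqueness of lifts against a generic map
  have huniq : ∀ (c : Cᵒᵖ) (o : (F.obj (⊤_ (Cᵒᵖ ⥤ Type))).obj c) {W : Cᵒᵖ ⥤ Type}
      (l l' : B c o ⟶ W), ξ c o ≫ F.map l = ξ c o ≫ F.map l' → l = l' := by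
    intro c o W l l' hl
    obtain ⟨m, -, hu⟩ := hgen c o (ξ c o ≫ F.map l') (terminal.from W) (φ c o)
      (by rw [Category.assoc, ← F.map_comp,
            terminal.hom_ext (l' ≫ terminal.from W) (φ c o)])
    rw [hu l ⟨hl, terminal.hom_ext _ _⟩, hu l' ⟨rfl, terminal.hom_ext _ _⟩]
  have hexists : ∀ (c : Cᵒᵖ) (o : (F.obj (⊤_ (Cᵒᵖ ⥤ Type))).obj c) {W : Cᵒᵖ ⥤ Type}
      (χ : yoneda.obj c.unop ⟶ F.obj W),
      χ ≫ F.map (terminal.from W) = yonedaEquiv.symm o →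
      ∃ l : B c o ⟶ W, ξ c o ≫ F.map l = χ := by
    intro c o W χ hχ
    obtain ⟨m, ⟨hm1, -⟩, -⟩ := hgen c o χ (terminal.from W) (φ c o) (by rw [hχ, hfac])
    exact ⟨m, hm1⟩
  -- the arity functor
  have hmap : ∀ (a b : (F.obj (⊤_ (Cᵒᵖ ⥤ Type))).Elements) (m : a ⟶ b),
      ∃ l : B b.1 b.2 ⟶ B a.1 a.2,
        ξ b.1 b.2 ≫ F.map l = yoneda.map m.1.unop ≫ ξ a.1 a.2 := by
    intro a b m
    apply hexists
    rw [Category.assoc, terminal.hom_ext (terminal.from (B a.1 a.2)) (φ a.1 a.2), hfac,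
      yoneda_symm_nat, m.2]
  choose Em hEm using hmap
  have hbij : ∀ (X : Cᵒᵖ ⥤ Type) (c : Cᵒᵖ), Function.Bijective
      (fun (w : Σ o : (F.obj (⊤_ (Cᵒᵖ ⥤ Type))).obj c, (B c o ⟶ X)) =>
        (yonedaEquiv (ξ c w.1 ≫ F.map w.2) : (F.obj X).obj c)) := by
    intro X c
    constructor
    · rintro ⟨o, f⟩ ⟨o', f'⟩ hw
      have hξ : ξ c o ≫ F.map f = ξ c o' ≫ F.map f' := yonedaEquiv.injective hw
      have h1 : o = o' := by
        have h2 : (yonedaEquiv.symm o : yoneda.obj c.unop ⟶ F.obj (⊤_ (Cᵒᵖ ⥤ Type)))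
            = yonedaEquiv.symm o' := by
          rw [← hfac c o, ← hfac c o',
            show φ c o = f ≫ terminal.from X from terminal.hom_ext _ _,
            show φ c o' = f' ≫ terminal.from X from terminal.hom_ext _ _,
            F.map_comp, F.map_comp, ← Category.assoc, ← Category.assoc, hξ]
        exact yonedaEquiv.symm.injective h2
      subst h1
      obtain rfl : f = f' := huniq c o f f' hξ
      rfl
    · intro x
      have hsq : (yonedaEquiv.symm x : yoneda.obj c.unop ⟶ F.obj X) ≫ F.map (terminal.from X)
          = yonedaEquiv.symm ((F.map (terminal.from X)).app c x) := by
        apply yonedaEquiv.injective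
        rw [yonedaEquiv_comp, Equiv.apply_symm_apply, Equiv.apply_symm_apply]
      obtain ⟨l, hl⟩ := hexists c _ _ hsq
      refine ⟨⟨(F.map (terminal.from X)).app c x, l⟩, ?_⟩
      dsimp only
      rw [hl, Equiv.apply_symm_apply]
  refine ⟨{ obj := fun x => B x.unop.1 x.unop.2
            map := fun {x y} f => Em y.unop x.unop f.unop
            map_id := fun x => ?_
            map_comp := fun {x y z} f g => ?_ },
      fun X c => (Equiv.ofBijective _ (hbij X c)).symm, ?_, ?_⟩
  · apply huniq x.unop.1 x.unop.2
    rw [hEm]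
    have h1 : (((𝟙 x).unop : x.unop ⟶ x.unop).1 : x.unop.1 ⟶ x.unop.1) = 𝟙 x.unop.1 := rfl
    rw [h1]
    simp
  · apply huniq x.unop.1 x.unop.2
    rw [hEm, F.map_comp, ← Category.assoc, hEm, Category.assoc, hEm, ← Category.assoc,
      ← yoneda.map_comp]
    rfl
  · intro X Y f c x
    obtain ⟨w, rfl⟩ : ∃ w, (Equiv.ofBijective _ (hbij X c)) w = x :=
      ⟨_, Equiv.apply_symm_apply _ x⟩
    rw [Equiv.symm_apply_apply, Equiv.symm_apply_eq, Equiv.ofBijective_apply,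
      Equiv.ofBijective_apply]
    show (F.map f).app c (yonedaEquiv (ξ c w.1 ≫ F.map w.2))
      = yonedaEquiv (ξ c w.1 ≫ F.map (w.2 ≫ f))
    rw [← yonedaEquiv_comp, Category.assoc, ← F.map_comp]
  · intro X c c' γ x
    suffices h : ∀ (w : Σ o : (F.obj (⊤_ (Cᵒᵖ ⥤ Type))).obj c, (B c o ⟶ X)),
        x = yonedaEquiv (ξ c w.1 ≫ F.map w.2) →
        (Equiv.ofBijective _ (hbij X c')).symm ((F.obj X).map γ x) =
          ⟨(F.obj (⊤_ (Cᵒᵖ ⥤ Type))).map γ w.1,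
            Em ((F.obj (⊤_ (Cᵒᵖ ⥤ Type))).elementsMk c w.1)
              ((F.obj (⊤_ (Cᵒᵖ ⥤ Type))).elementsMk c' ((F.obj (⊤_ (Cᵒᵖ ⥤ Type))).map γ w.1))
              ⟨γ, rfl⟩ ≫ w.2⟩ by
      exact h _ (Equiv.apply_symm_apply (Equiv.ofBijective _ (hbij X c)) x).symm
    intro w hx
    subst hx
    rw [Equiv.symm_apply_eq]
    have hstep := hEm ((F.obj (⊤_ (Cᵒᵖ ⥤ Type))).elementsMk c w.1)
      ((F.obj (⊤_ (Cᵒᵖ ⥤ Type))).elementsMk c' ((F.obj (⊤_ (Cᵒᵖ ⥤ Type))).map γ w.1)) ⟨γ, rfl⟩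
    show (F.obj X).map γ (yonedaEquiv (ξ c w.1 ≫ F.map w.2))
      = yonedaEquiv (ξ c' ((F.obj (⊤_ (Cᵒᵖ ⥤ Type))).map γ w.1) ≫
          F.map (Em ((F.obj (⊤_ (Cᵒᵖ ⥤ Type))).elementsMk c w.1)
            ((F.obj (⊤_ (Cᵒᵖ ⥤ Type))).elementsMk c' ((F.obj (⊤_ (Cᵒᵖ ⥤ Type))).map γ w.1))
            ⟨γ, rfl⟩ ≫ w.2))
    rw [F.map_comp, ← Category.assoc, hstep, yonedaEquiv_naturality', Category.assoc]

end Stmt14Aux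

/-- a functor `F : psh(C) ⥤ psh(C)` is familial iff every morphism
`g : Y ⟶ F(X)` admits a generic-free factorisation. -/
theorem stmt14 {C : Type} [SmallCategory C] (F : (Cᵒᵖ ⥤ Type) ⥤ (Cᵒᵖ ⥤ Type)) :
    IsFamilial F ↔
      ∀ (X Y : Cᵒᵖ ⥤ Type) (g : Y ⟶ F.obj X),
        ∃ (B : Cᵒᵖ ⥤ Type) (ξ : Y ⟶ F.obj B) (φ : B ⟶ X),
          IsGeneric F ξ ∧ ξ ≫ F.map φ = g := by
  constructor
  · intro hF X Y g
    exact Stmt14Aux.free_of_familial F hF X Y g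
  · exact Stmt14Aux.familial_of_free F
end

section
/- Let T be a monad on presheaves over Γ_A such that T preserves functional bisimulations, and let α : T(X) → X be a compositional T-algebra (α is a functional bisimulation). Then bisimilarity ∼_X on X is a congruence: the canonical morphism T(∼_X) → X² given by α² ∘ ⟨T(π₁), T(π₂)⟩ ∘ T(m) factors through the monomorphism m : ∼_X ↪ X². -/
open CategoryTheory Limits Opposite


inductive GObj (A : Type) : Type
  | star : GObj A
  | lab (a : A) : GObj A

inductive GHom (A : Type) : GObj A → GObj A → Type
  | id (x : GObj A) : GHom A x x
  | s (a : A) : GHom A .star (.lab a)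
  | t (a : A) : GHom A .star (.lab a)

def GHom.comp {A : Type} : ∀ {x y z : GObj A}, GHom A x y → GHom A y z → GHom A x z
  | _, _, _, .id _, g => g
  | _, _, _, .s a, .id _ => .s a
  | _, _, _, .t a, .id _ => .t a

instance (A : Type) : Category (GObj A) where
  Hom := GHom A
  id := GHom.id
  comp := GHom.comp
  id_comp f := rfl
  comp_id f := by cases f <;> rfl
  assoc f g h := by cases f <;> cases g <;> cases h <;> rfl

abbrev Psh (A : Type) := (GObj A)ᵒᵖ ⥤ Type

def FunctionalBisim {A : Type} {X Y : Psh A} (f : X ⟶ Y) : Prop :=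
  ∀ a : A, HasLiftingProperty (yoneda.map (GHom.s a : (GObj.star : GObj A) ⟶ GObj.lab a)) f

lemma bisim_of_epi_comp {A : Type} {R I X : Psh A} (e : R ⟶ I) [Epi e] (g : I ⟶ X)
    (h : FunctionalBisim (e ≫ g)) : FunctionalBisim g := by
  intro a
  constructor
  intro u v sq
  have hsurj : Function.Surjective (e.app (op GObj.star)) :=
    (epi_iff_surjective _).mp inferInstance
  obtain ⟨x, hx⟩ := hsurj (yonedaEquiv u)
  let u' : yoneda.obj (GObj.star : GObj A) ⟶ R := yonedaEquiv.symm x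
  have hu' : u' ≫ e = u := by
    apply yonedaEquiv.injective
    rw [yonedaEquiv_comp]
    simp [u', hx]
  have sq' : CommSq u' (yoneda.map (GHom.s a : (GObj.star : GObj A) ⟶ GObj.lab a)) (e ≫ g) v := by
    constructor
    rw [← Category.assoc, hu', sq.w]
  obtain ⟨⟨l⟩⟩ := (h a).sq_hasLift sq'
  exact ⟨⟨⟨l.l ≫ e, by rw [← Category.assoc, l.fac_left, hu'], by
    rw [Category.assoc]; exact l.fac_right⟩⟩⟩

lemma bisim_comp {A : Type} {X Y Z : Psh A} {f : X ⟶ Y} {g : Y ⟶ Z}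
    (hf : FunctionalBisim f) (hg : FunctionalBisim g) : FunctionalBisim (f ≫ g) := by
  intro a
  haveI := hf a
  haveI := hg a
  infer_instance

lemma epi_toImagePresheaf {A : Type} {F G : Psh A} (f : F ⟶ G) :
    Epi (Subfunctor.toRange f) := by
  haveI : ∀ c, Epi ((Subfunctor.toRange f).app c) := by
    intro c
    rw [epi_iff_surjective]
    rintro ⟨y, x, rfl⟩
    exact ⟨x, rfl⟩
  exact NatTrans.epi_of_epi_app _

/-- if `T` preserves functional bisimulations and `α : T(X) ⟶ X` is a
compositional algebra, then bisimilarity `∼_X` (the largest bisimulation) is a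
congruence: `α² ∘ ⟨T(π₁), T(π₂)⟩ ∘ T(m)` factors through `m : ∼_X ↪ X²`. -/
theorem stmt16 {A : Type} (T : Monad (Psh A))
    (hT : ∀ {X Y : Psh A} (f : X ⟶ Y), FunctionalBisim f →
      FunctionalBisim ((T : Psh A ⥤ Psh A).map f))
    {X : Psh A} (α : (T : Psh A ⥤ Psh A).obj X ⟶ X)
    (hunit : T.η.app X ≫ α = 𝟙 X)
    (hmul : T.μ.app X ≫ α = (T : Psh A ⥤ Psh A).map α ≫ α)
    (hcomp : FunctionalBisim α)
    (Sim : Psh A) (m : Sim ⟶ X ⨯ X) [Mono m]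
    (hfst : FunctionalBisim (m ≫ prod.fst))
    (hsnd : FunctionalBisim (m ≫ prod.snd))
    (hlargest : ∀ (R : Psh A) (m' : R ⟶ X ⨯ X), Mono m' →
      FunctionalBisim (m' ≫ prod.fst) → FunctionalBisim (m' ≫ prod.snd) →
        ∃ h : R ⟶ Sim, h ≫ m = m') :
    ∃ h : (T : Psh A ⥤ Psh A).obj Sim ⟶ Sim,
      h ≫ m = (T : Psh A ⥤ Psh A).map m ≫
        prod.lift ((T : Psh A ⥤ Psh A).map prod.fst) ((T : Psh A ⥤ Psh A).map prod.snd) ≫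
        prod.map α α := by
  let f : (T : Psh A ⥤ Psh A).obj Sim ⟶ X ⨯ X := (T : Psh A ⥤ Psh A).map m ≫
    prod.lift ((T : Psh A ⥤ Psh A).map prod.fst) ((T : Psh A ⥤ Psh A).map prod.snd) ≫
    prod.map α α
  have hf1 : f ≫ prod.fst = (T : Psh A ⥤ Psh A).map (m ≫ prod.fst) ≫ α := by simp [f]; exact prod.lift_fst _ _
  have hf2 : f ≫ prod.snd = (T : Psh A ⥤ Psh A).map (m ≫ prod.snd) ≫ α := by simp [f]; exact prod.lift_snd _ _
  haveI : Epi (Subfunctor.toRange f) := epi_toImagePresheaf f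
  have hfac : Subfunctor.toRange f ≫
      (Subfunctor.range f).ι = f :=
    Subfunctor.toRange_ι f
  have b1 : FunctionalBisim ((Subfunctor.range f).ι ≫ prod.fst) := by
    apply bisim_of_epi_comp (Subfunctor.toRange f)
    rw [← Category.assoc, hfac, hf1]
    exact bisim_comp (hT _ hfst) hcomp
  have b2 : FunctionalBisim ((Subfunctor.range f).ι ≫ prod.snd) := by
    apply bisim_of_epi_comp (Subfunctor.toRange f)
    rw [← Category.assoc, hfac, hf2]
    exact bisim_comp (hT _ hsnd) hcomp
  obtain ⟨h', hh'⟩ := hlargest (Subfunctor.range f).toFunctor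
    (Subfunctor.range f).ι inferInstance b1 b2
  exact ⟨Subfunctor.toRange f ≫ h', by rw [Category.assoc, hh', hfac]⟩
end
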